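/- For α ∈ ℕ, β > −1, n ≥ 1, and R_n^{α,β}(x) = A_n^{α,β}·(x−1)·P_{n−1}^{α+2,β}(x) with A_n^{α,β} = (α+2)_{n−1}(α+β+2)_n / (2·n!·(β+1)_{n−1}), the Jacobi-type operator satisfies (x−1)(x+1)^{−β} D^{α+2}[(x+1)^{α+β+2} D^{α+2}((x−1)^{α+1} R_n^{α,β}(x))] = (n)_{α+2}·(n+β)_{α+2}·R_n^{α,β}(x) for all x ∈ (−1,1). -/

import Mathlib

/-- Pochhammer symbol (rising factorial) for a real argument. -/
noncomputable def poch (a : ℝ) (k : ℕ) : ℝ := ∏ i ∈ Finset.range k, (a + i)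

/-- Jacobi polynomial of degree `n` with real parameters `γ, δ`, via its
terminating hypergeometric series. -/
noncomputable def jacobiP (n : ℕ) (γ δ : ℝ) (x : ℝ) : ℝ :=
  (poch (γ + 1) n / Nat.factorial n) *
    ∑ k ∈ Finset.range (n + 1),
      (poch (-(n : ℝ)) k * poch ((n : ℝ) + γ + δ + 1) k /
        (poch (γ + 1) k * Nat.factorial k)) * ((1 - x) / 2) ^ k

open Finset Polynomial

lemma poch_succ (a : ℝ) (k : ℕ) : poch a (k+1) = poch a k * (a + k) := by
  simp [poch, Finset.prod_range_succ]

lemma poch_succ' (a : ℝ) (k : ℕ) : poch a (k+1) = a * poch (a+1) k := by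
  rw [poch, Finset.prod_range_succ']
  simp only [Nat.cast_zero, add_zero, mul_comm]
  congr 1
  · exact Finset.prod_congr rfl (fun i _ => by push_cast; ring)

lemma poch_pos {a : ℝ} (h : 0 < a) (k : ℕ) : 0 < poch a k := by
  apply Finset.prod_pos
  intro i _
  positivity

lemma poch_e (a : ℝ) (k : ℕ) : poch a k * (a + k) = a * poch (a+1) k := by
  rw [← poch_succ, poch_succ']

lemma poch_zero_of_lt (m k : ℕ) (h : m < k) : poch (-(m:ℝ)) k = 0 := by
  apply Finset.prod_eq_zero (Finset.mem_range.mpr h)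
  simp

noncomputable def cc (m : ℕ) (γ δ : ℝ) (k : ℕ) : ℝ :=
  (poch (γ + 1) m / Nat.factorial m) *
    (poch (-(m : ℝ)) k * poch ((m : ℝ) + γ + δ + 1) k /
      (poch (γ + 1) k * Nat.factorial k)) * ((-1)/2) ^ k

lemma cA (m : ℕ) (γ δ : ℝ) (hγ : 1 ≤ γ) (k : ℕ) :
    (γ + k) * cc m γ δ k = ((m:ℝ) + γ) * cc m (γ-1) (δ+1) k := by
  have hg0 : (0:ℝ) < γ := by linarith
  have hg1 : (0:ℝ) < γ + 1 := by linarith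
  have h1 : poch (γ+1) k ≠ 0 := (poch_pos hg1 k).ne'
  have h0 : poch γ k ≠ 0 := (poch_pos hg0 k).ne'
  have e1 : poch γ k * (γ + k) = γ * poch (γ+1) k := poch_e γ k
  have e2 : poch γ m * (γ + m) = γ * poch (γ+1) m := poch_e γ m
  have key : (γ + k) * (poch (γ+1) m / poch (γ+1) k)
      = ((m:ℝ) + γ) * (poch γ m / poch γ k) := by
    field_simp
    linear_combination poch (γ+1) m * e1 - poch (γ+1) k * e2
  have hc1 : cc m γ δ k = (poch (γ+1) m / poch (γ+1) k) *
      (poch (-(m : ℝ)) k * poch ((m : ℝ) + γ + δ + 1) k /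
        (Nat.factorial m * Nat.factorial k) * ((-1)/2) ^ k) := by
    unfold cc; ring
  have hc2 : cc m (γ-1) (δ+1) k = (poch γ m / poch γ k) *
      (poch (-(m : ℝ)) k * poch ((m : ℝ) + γ + δ + 1) k /
        (Nat.factorial m * Nat.factorial k) * ((-1)/2) ^ k) := by
    unfold cc
    rw [show γ - 1 + 1 = γ by ring, show (m:ℝ) + (γ-1) + (δ+1) + 1 = (m:ℝ) + γ + δ + 1 by ring]
    ring
  rw [hc1, hc2]
  linear_combination (poch (-(m : ℝ)) k * poch ((m : ℝ) + γ + δ + 1) k /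
        (Nat.factorial m * Nat.factorial k) * ((-1)/2) ^ k) * key

lemma cB1 (m : ℕ) (γ δ : ℝ) (hγ : 0 ≤ γ) (k : ℕ) :
    (δ + k) * cc m γ δ k + 2*((k:ℝ)+1) * cc m γ δ (k+1)
      = ((m:ℝ) + δ) * cc m (γ+1) (δ-1) k := by
  have hg1 : (0:ℝ) < γ + 1 := by linarith
  have hg2 : (0:ℝ) < γ + 2 := by linarith
  have h1 : poch (γ+1) k ≠ 0 := (poch_pos hg1 k).ne'
  have h2 : poch (γ+2) k ≠ 0 := (poch_pos hg2 k).ne'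
  have hk : (Nat.factorial k : ℝ) ≠ 0 := by positivity
  have hm : (Nat.factorial m : ℝ) ≠ 0 := by positivity
  have hgk : (γ + 1 + k : ℝ) ≠ 0 := by positivity
  have hstep : cc m γ δ (k+1) * ((γ+1+k)*((k:ℝ)+1))
      = cc m γ δ k * ((-(m:ℝ)+k)*(((m:ℝ)+γ+δ+1)+k)*((-1)/2)) := by
    unfold cc
    rw [poch_succ (-(m:ℝ)) k, poch_succ ((m:ℝ)+γ+δ+1) k, poch_succ (γ+1) k,
      Nat.factorial_succ, pow_succ]
    push_cast
    field_simp
  have e1 : poch (γ+1) k * (γ+1 + k) = (γ+1) * poch (γ+2) k := by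
    have := poch_e (γ+1) k; rw [show γ+1+1 = γ+2 by ring] at this; exact this
  have e2 : poch (γ+1) m * (γ+1 + m) = (γ+1) * poch (γ+2) m := by
    have := poch_e (γ+1) m; rw [show γ+1+1 = γ+2 by ring] at this; exact this
  have key : (poch (γ+2) m / poch (γ+2) k) * (γ+1+k)
      = (poch (γ+1) m / poch (γ+1) k) * ((m:ℝ)+γ+1) := by
    field_simp
    linear_combination poch (γ+2) m * e1 - poch (γ+2) k * e2
  have hratio : cc m (γ+1) (δ-1) k * (γ+1+k) = cc m γ δ k * ((m:ℝ)+γ+1) := by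
    have hc1 : cc m γ δ k = (poch (γ+1) m / poch (γ+1) k) *
        (poch (-(m : ℝ)) k * poch ((m : ℝ) + γ + δ + 1) k /
          (Nat.factorial m * Nat.factorial k) * ((-1)/2) ^ k) := by
      unfold cc; ring
    have hc2 : cc m (γ+1) (δ-1) k = (poch (γ+2) m / poch (γ+2) k) *
        (poch (-(m : ℝ)) k * poch ((m : ℝ) + γ + δ + 1) k /
          (Nat.factorial m * Nat.factorial k) * ((-1)/2) ^ k) := by
      unfold cc
      rw [show γ + 1 + 1 = γ + 2 by ring,
        show (m:ℝ) + (γ+1) + (δ-1) + 1 = (m:ℝ) + γ + δ + 1 by ring]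
      ring
    rw [hc1, hc2]
    linear_combination (poch (-(m : ℝ)) k * poch ((m : ℝ) + γ + δ + 1) k /
          (Nat.factorial m * Nat.factorial k) * ((-1)/2) ^ k) * key
  apply mul_right_cancel₀ hgk
  linear_combination 2 * hstep - ((m:ℝ)+δ) * hratio

lemma cc_top (m : ℕ) (γ δ : ℝ) : cc m γ δ (m+1) = 0 := by
  unfold cc
  rw [poch_zero_of_lt m (m+1) (by omega)]
  ring

noncomputable def QQ (m : ℕ) (γ δ : ℝ) : Polynomial ℝ :=
  ∑ k ∈ range (m+1), C (cc m γ δ k) * X^k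

lemma QQ_deriv (m : ℕ) (γ δ : ℝ) :
    derivative (QQ m γ δ) = ∑ k ∈ range (m+1), C (cc m γ δ k * k) * (X:Polynomial ℝ)^(k-1) := by
  unfold QQ
  rw [derivative_sum]
  refine Finset.sum_congr rfl (fun k _ => ?_)
  rw [derivative_C_mul, derivative_X_pow, C_mul]
  ring

lemma X_mul_aux (k : ℕ) : (X:Polynomial ℝ) * (C ((k:ℝ)) * X^(k-1)) = C ((k:ℝ)) * X^k := by
  cases k with
  | zero => simp
  | succ j => rw [Nat.add_sub_cancel, pow_succ]; ring

lemma QA (m : ℕ) (γ δ : ℝ) (hγ : 1 ≤ γ) :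
    C γ * QQ m γ δ + X * derivative (QQ m γ δ) = C ((m:ℝ) + γ) * QQ m (γ-1) (δ+1) := by
  rw [QQ_deriv]
  unfold QQ
  rw [Finset.mul_sum, Finset.mul_sum, Finset.mul_sum, ← Finset.sum_add_distrib]
  refine Finset.sum_congr rfl (fun k _ => ?_)
  have h : C γ * (C (cc m γ δ k) * X^k) + X * (C (cc m γ δ k * k) * X^(k-1))
      = C ((γ + k) * cc m γ δ k) * X^k := by
    rw [C_mul, C_mul, C_add]
    linear_combination C (cc m γ δ k) * X_mul_aux k
  rw [h, cA m γ δ hγ k, C_mul]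
  ring

lemma QB (m : ℕ) (γ δ : ℝ) (hγ : 0 ≤ γ) :
    C δ * QQ m γ δ + (X + C 2) * derivative (QQ m γ δ)
      = C ((m:ℝ) + δ) * QQ m (γ+1) (δ-1) := by
  have e2 : C (2:ℝ) * (∑ k ∈ range (m+1), C (cc m γ δ k * k) * (X:Polynomial ℝ)^(k-1))
      = ∑ k ∈ range (m+1), C (2*((k:ℝ)+1) * cc m γ δ (k+1)) * X^k := by
    rw [Finset.mul_sum,
      Finset.sum_range_succ' (fun k => C (2:ℝ) * (C (cc m γ δ k * (k:ℝ)) * X^(k-1))),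
      Finset.sum_range_succ (fun k => C (2*((k:ℝ)+1) * cc m γ δ (k+1)) * (X:Polynomial ℝ)^k)]
    have hz : C (2*((m:ℝ)+1) * cc m γ δ (m+1)) * (X:Polynomial ℝ)^m = 0 := by
      rw [cc_top]; simp
    rw [hz, add_zero]
    have hz0 : C (2:ℝ) * (C (cc m γ δ 0 * ((0:ℕ):ℝ)) * (X:Polynomial ℝ)^(0-1)) = 0 := by
      simp
    rw [hz0, add_zero]
    refine Finset.sum_congr rfl (fun k _ => ?_)
    push_cast
    rw [← mul_assoc, ← C_mul,
      show (2:ℝ) * (cc m γ δ (k+1) * ((k:ℝ)+1)) = 2*((k:ℝ)+1) * cc m γ δ (k+1) from by ring]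
  rw [QQ_deriv, add_mul, e2]
  unfold QQ
  rw [Finset.mul_sum, Finset.mul_sum, Finset.mul_sum, ← Finset.sum_add_distrib,
    ← Finset.sum_add_distrib]
  refine Finset.sum_congr rfl (fun k _ => ?_)
  have key := cB1 m γ δ hγ k
  have h : C δ * (C (cc m γ δ k) * X^k) + (X * (C (cc m γ δ k * k) * X^(k-1))
        + C (2*((k:ℝ)+1) * cc m γ δ (k+1)) * X^k)
      = C ((δ + k) * cc m γ δ k + 2*((k:ℝ)+1) * cc m γ δ (k+1)) * X^k := by
    simp only [C_add, C_mul]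
    linear_combination C (cc m γ δ k) * X_mul_aux k
  rw [h, key, C_mul]
  ring

lemma prod_shift (a : ℝ) (j : ℕ) :
    ∏ i ∈ range (j+1), (a + 1 - i) = (a+1) * ∏ i ∈ range j, (a - i) := by
  rw [Finset.prod_range_succ' (fun i => a + 1 - (i:ℝ)), mul_comm]
  congr 1
  · norm_num
  · exact Finset.prod_congr rfl (fun i _ => by push_cast; ring)

lemma inner_iter (m : ℕ) : ∀ (j g : ℕ) (δ : ℝ),
    derivative^[j] ((X:Polynomial ℝ)^(g+j) * QQ m ((g:ℝ)+(j:ℝ)) δ)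
      = C (∏ i ∈ range j, ((m:ℝ) + g + j - i)) * ((X:Polynomial ℝ)^g * QQ m (g:ℝ) (δ + j)) := by
  intro j
  induction j with
  | zero => intro g δ; simp
  | succ j ih =>
    intro g δ
    rw [Function.iterate_succ_apply]
    have hg0 : (0:ℝ) ≤ (g:ℝ) := Nat.cast_nonneg g
    have hj0 : (0:ℝ) ≤ (j:ℝ) := Nat.cast_nonneg j
    have hd : derivative ((X:Polynomial ℝ)^(g+(j+1)) * QQ m ((g:ℝ)+((j:ℕ)+1:ℕ)) δ)
        = C ((m:ℝ) + ((g:ℝ)+(j:ℝ)+1)) * ((X:Polynomial ℝ)^(g+j) * QQ m ((g:ℝ)+(j:ℝ)) (δ+1)) := by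
      rw [derivative_mul, derivative_X_pow]
      have harr : (X:Polynomial ℝ)^(g+(j+1)) = X^(g+j) * X := by
        rw [← pow_succ, ← add_assoc]
      have harr2 : ((g:ℝ)+(((j:ℕ)+1:ℕ)):ℝ) = (g:ℝ)+(j:ℝ)+1 := by push_cast; ring
      have hQA := QA m ((g:ℝ)+(j:ℝ)+1) δ (by linarith)
      rw [show (g:ℝ)+(j:ℝ)+1 - 1 = (g:ℝ)+(j:ℝ) from by ring] at hQA
      have hpow : g + (j+1) - 1 = g + j := by omega
      rw [harr2, hpow, harr]
      calc C (↑(g + (j+1)):ℝ) * X ^ (g+j) * QQ m ((g:ℝ)+(j:ℝ)+1) δ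
            + X^(g+j) * X * derivative (QQ m ((g:ℝ)+(j:ℝ)+1) δ)
          = X^(g+j) * (C ((g:ℝ)+(j:ℝ)+1) * QQ m ((g:ℝ)+(j:ℝ)+1) δ
            + X * derivative (QQ m ((g:ℝ)+(j:ℝ)+1) δ)) := by
            push_cast; ring
        _ = X^(g+j) * (C ((m:ℝ) + ((g:ℝ)+(j:ℝ)+1)) * QQ m ((g:ℝ)+(j:ℝ)) (δ+1)) := by rw [hQA]
        _ = C ((m:ℝ) + ((g:ℝ)+(j:ℝ)+1)) * (X^(g+j) * QQ m ((g:ℝ)+(j:ℝ)) (δ+1)) := by ring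
    rw [hd, Polynomial.iterate_derivative_C_mul, ih g (δ+1)]
    have hδ : (δ+1) + (j:ℝ) = δ + ((j:ℕ)+1:ℕ) := by push_cast; ring
    have hp : ∏ i ∈ range (j+1), ((m:ℝ) + (g:ℝ) + (((j:ℕ)+1:ℕ):ℝ) - i)
        = ((m:ℝ)+(g:ℝ)+(j:ℝ)+1) * ∏ i ∈ range j, ((m:ℝ)+(g:ℝ)+(j:ℝ)-i) := by
      have h := prod_shift ((m:ℝ)+(g:ℝ)+(j:ℝ)) j
      rw [← h]
      exact Finset.prod_congr rfl (fun i _ => by push_cast; ring)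
    rw [hδ, hp, C_mul,
      show ((m:ℝ) + ((g:ℝ)+(j:ℝ)+1)) = (m:ℝ)+(g:ℝ)+(j:ℝ)+1 from by ring, mul_assoc]

noncomputable def opStep (μ : ℝ) (q : Polynomial ℝ) : Polynomial ℝ :=
  C μ * q + (X + C 2) * derivative q

noncomputable def iterOp : ℝ → ℕ → Polynomial ℝ → Polynomial ℝ
  | _, 0, q => q
  | μ, (j+1), q => iterOp (μ-1) j (opStep μ q)

lemma iterOp_C_mul : ∀ (j : ℕ) (μ a : ℝ) (q : Polynomial ℝ),
    iterOp μ j (C a * q) = C a * iterOp μ j q := by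
  intro j
  induction j with
  | zero => intro μ a q; rfl
  | succ j ih =>
    intro μ a q
    have h : opStep μ (C a * q) = C a * opStep μ q := by
      unfold opStep
      rw [derivative_C_mul]
      ring
    rw [iterOp, h, ih, iterOp]

lemma outer_iter (m : ℕ) : ∀ (j g : ℕ) (δ : ℝ),
    iterOp δ j (QQ m (g:ℝ) δ)
      = C (∏ i ∈ range j, ((m:ℝ) + δ - i)) * QQ m ((g:ℝ)+j) (δ - (j:ℝ)) := by
  intro j
  induction j with
  | zero => intro g δ; simp [iterOp]
  | succ j ih =>
    intro g δ
    rw [iterOp]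
    have hstep : opStep δ (QQ m (g:ℝ) δ) = C ((m:ℝ) + δ) * QQ m ((g:ℝ)+1) (δ-1) := by
      unfold opStep
      exact QB m (g:ℝ) δ (Nat.cast_nonneg g)
    have h2 : QQ m ((g:ℝ)+1) (δ-1) = QQ m (((g+1:ℕ)):ℝ) (δ-1) := by push_cast; ring_nf
    rw [hstep, h2, iterOp_C_mul, ih (g+1) (δ-1)]
    have hδ : (δ-1) - (j:ℝ) = δ - (((j:ℕ)+1:ℕ):ℝ) := by push_cast; ring
    have hg : ((g+1:ℕ):ℝ) + (j:ℝ) = (g:ℝ) + (((j:ℕ)+1:ℕ):ℝ) := by push_cast; ring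
    have hp : ∏ i ∈ range (j+1), ((m:ℝ) + δ - i)
        = ((m:ℝ)+δ) * ∏ i ∈ range j, ((m:ℝ)+(δ-1)-i) := by
      have h := prod_shift ((m:ℝ)+δ-1) j
      rw [show (m:ℝ)+δ-1+1 = (m:ℝ)+δ from by ring] at h
      rw [h]
      congr 1
      exact Finset.prod_congr rfl (fun i _ => by ring)
    rw [hδ, hg, hp, C_mul, mul_assoc]

lemma jacobi_eval (m : ℕ) (γ δ x : ℝ) :
    jacobiP m γ δ x = (QQ m γ δ).eval (x-1) := by
  unfold jacobiP QQ cc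
  rw [Polynomial.eval_finset_sum, Finset.mul_sum]
  refine Finset.sum_congr rfl fun k _ => ?_
  simp only [eval_mul, eval_pow, eval_C, eval_X]
  rw [show (1-x)/2 = (-1)/2 * (x-1) from by ring, mul_pow]
  ring

lemma deriv_shift (p : Polynomial ℝ) :
    deriv (fun s => Polynomial.eval (s-1) p) = fun t => Polynomial.eval (t-1) (derivative p) := by
  funext t
  have h1 : HasDerivAt (fun s : ℝ => s - 1) 1 t := (hasDerivAt_id t).sub_const 1
  have h2 := (p.hasDerivAt (t-1)).comp t h1
  have h3 := h2.deriv
  simp only [mul_one] at h3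
  exact h3

lemma iter_deriv_shift : ∀ (j : ℕ) (p : Polynomial ℝ),
    deriv^[j] (fun s => Polynomial.eval (s-1) p)
      = fun t => Polynomial.eval (t-1) (derivative^[j] p) := by
  intro j
  induction j with
  | zero => intro p; rfl
  | succ j ih =>
    intro p
    rw [Function.iterate_succ_apply, deriv_shift, ih (derivative p),
      Function.iterate_succ_apply]

lemma iter_deriv_congr {s : Set ℝ} (hs : IsOpen s) : ∀ (j : ℕ) (f g : ℝ → ℝ),
    (∀ y ∈ s, f y = g y) → ∀ x ∈ s, deriv^[j] f x = deriv^[j] g x := by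
  intro j
  induction j with
  | zero => intro f g h x hx; exact h x hx
  | succ j ih =>
    intro f g h x hx
    rw [Function.iterate_succ_apply, Function.iterate_succ_apply]
    refine ih (deriv f) (deriv g) (fun y hy => ?_) x hx
    exact Filter.EventuallyEq.deriv_eq (Filter.eventuallyEq_of_mem (hs.mem_nhds hy) h)

lemma rpow_iter : ∀ (j : ℕ) (μ : ℝ) (q : Polynomial ℝ) (x : ℝ), -1 < x →
    deriv^[j] (fun t => (t+1) ^ μ * Polynomial.eval (t-1) q) x
      = (x+1) ^ (μ - j) * Polynomial.eval (x-1) (iterOp μ j q) := by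
  intro j
  induction j with
  | zero => intro μ q x hx; simp [iterOp]
  | succ j ih =>
    intro μ q x hx
    rw [Function.iterate_succ_apply]
    have hcong : ∀ y ∈ Set.Ioi (-1:ℝ),
        deriv (fun t => (t+1) ^ μ * Polynomial.eval (t-1) q) y
          = (fun t => (t+1) ^ (μ-1) * Polynomial.eval (t-1) (opStep μ q)) y := by
      intro y hy
      have hy1 : (0:ℝ) < y + 1 := by
        have : -1 < y := hy
        linarith
      have hpow : HasDerivAt (fun t : ℝ => (t+1) ^ μ) (μ * (y+1)^(μ-1) * 1) y := by
        have h0 : HasDerivAt (fun z : ℝ => z ^ μ) (μ * (y+1)^(μ-1)) (y+1) :=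
          Real.hasDerivAt_rpow_const (Or.inl hy1.ne')
        have h1 : HasDerivAt (fun t : ℝ => t + 1) 1 y := (hasDerivAt_id y).add_const 1
        exact h0.comp y h1
      have hev : HasDerivAt (fun t : ℝ => Polynomial.eval (t-1) q)
          (Polynomial.eval (y-1) (derivative q) * 1) y := by
        have h1 : HasDerivAt (fun s : ℝ => s - 1) 1 y := (hasDerivAt_id y).sub_const 1
        exact (q.hasDerivAt (y-1)).comp y h1
      have hmul := (hpow.mul hev).deriv
      rw [show deriv (fun t => (t+1) ^ μ * Polynomial.eval (t-1) q) y = _ from hmul]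
      unfold opStep
      simp only [eval_add, eval_mul, eval_C, eval_X]
      have hμ : (y+1) ^ μ = (y+1) ^ (μ-1) * (y+1) := by
        rw [← Real.rpow_add_one hy1.ne' (μ-1), sub_add_cancel]
      rw [hμ]
      ring
    rw [iter_deriv_congr isOpen_Ioi j _ _ hcong x hx]
    rw [ih (μ-1) (opStep μ q) x hx]
    rw [show μ - 1 - (j:ℝ) = μ - (((j:ℕ)+1:ℕ):ℝ) from by push_cast; ring]
    rfl

lemma poch_reflect (a : ℝ) (j : ℕ) :
    ∏ i ∈ range j, (a + j - 1 - i) = poch a j := by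
  rw [poch, ← Finset.prod_range_reflect (fun i => a + i) j]
  refine Finset.prod_congr rfl fun i hi => ?_
  have h1 : i < j := Finset.mem_range.mp hi
  rw [Nat.sub_sub, Nat.cast_sub (by omega : 1 + i ≤ j)]
  push_cast
  ring

theorem stmt9 (α : ℕ) (β : ℝ) (hβ : -1 < β) (n : ℕ) (hn : 1 ≤ n)
    (x : ℝ) (hx : x ∈ Set.Ioo (-1 : ℝ) 1) :
    let A : ℝ := poch ((α : ℝ) + 2) (n - 1) * poch ((α : ℝ) + β + 2) n /
      (2 * Nat.factorial n * poch (β + 1) (n - 1))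
    let R : ℝ → ℝ := fun t => A * (t - 1) * jacobiP (n - 1) ((α : ℝ) + 2) β t
    (x - 1) * (x + 1) ^ (-β) *
        deriv^[α + 2] (fun t => (t + 1) ^ ((α : ℝ) + β + 2) *
          deriv^[α + 2] (fun s => (s - 1) ^ (α + 1) * R s) t) x
      = poch (n : ℝ) (α + 2) * poch ((n : ℝ) + β) (α + 2) * R x := by
  intro A R
  set m := n - 1 with hm
  have hx1 : (0:ℝ) < x + 1 := by have := hx.1; linarith
  have hmcast : ((m:ℕ):ℝ) = (n:ℝ) - 1 := by
    rw [hm, Nat.cast_sub hn]; norm_num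
  have hA : ∀ s:ℝ, (s-1)^(α+1) * R s
      = Polynomial.eval (s-1) (C A * ((X:Polynomial ℝ)^(α+2) * QQ m ((α:ℝ)+2) β)) := by
    intro s
    unfold R
    beta_reduce
    rw [← hm, jacobi_eval m ((α:ℝ)+2) β s]
    simp only [eval_mul, eval_C, eval_pow, eval_X]
    ring
  have hinner := inner_iter m (α+2) 0 β
  rw [Nat.zero_add, pow_zero, one_mul] at hinner
  rw [show ((0:ℕ):ℝ) + ((α+2:ℕ):ℝ) = (α:ℝ)+2 from by push_cast; ring] at hinner
  have hstep1 : deriv^[α+2] (fun s => (s-1)^(α+1) * R s)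
      = fun t => Polynomial.eval (t-1)
          (C (A * ∏ i ∈ range (α+2), ((m:ℝ) + ((0:ℕ):ℝ) + ((α+2:ℕ):ℝ) - (i:ℝ))) *
            QQ m ((0:ℕ):ℝ) (β + ((α+2:ℕ):ℝ))) := by
    have hfn : (fun s => (s-1)^(α+1) * R s)
        = fun s => Polynomial.eval (s-1) (C A * ((X:Polynomial ℝ)^(α+2) * QQ m ((α:ℝ)+2) β)) :=
      funext hA
    rw [hfn, iter_deriv_shift]
    simp only [Polynomial.iterate_derivative_C_mul, hinner]
    funext t
    simp only [eval_mul, eval_C]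
    ring
  have hmid : (fun t => (t + 1) ^ ((α:ℝ) + β + 2) *
        deriv^[α+2] (fun s => (s - 1) ^ (α + 1) * R s) t)
      = fun t => (t+1) ^ (β + ((α+2:ℕ):ℝ)) * Polynomial.eval (t-1)
          (C (A * ∏ i ∈ range (α+2), ((m:ℝ) + ((0:ℕ):ℝ) + ((α+2:ℕ):ℝ) - (i:ℝ))) *
            QQ m ((0:ℕ):ℝ) (β + ((α+2:ℕ):ℝ))) := by
    funext t
    simp only [hstep1]
    rw [show (α:ℝ)+β+2 = β + ((α+2:ℕ):ℝ) from by push_cast; ring]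
  rw [hmid, rpow_iter (α+2) (β + ((α+2:ℕ):ℝ)) _ x hx.1, iterOp_C_mul,
    outer_iter m (α+2) 0 (β + ((α+2:ℕ):ℝ))]
  rw [show ((0:ℕ):ℝ) + ((α+2:ℕ):ℝ) = (α:ℝ)+2 from by push_cast; ring,
    show β + ((α+2:ℕ):ℝ) - ((α+2:ℕ):ℝ) = β from by ring]
  have hp1 : (∏ i ∈ range (α+2), ((m:ℝ) + ((0:ℕ):ℝ) + ((α+2:ℕ):ℝ) - (i:ℝ)))
      = poch (n:ℝ) (α+2) := by
    rw [← poch_reflect (n:ℝ) (α+2)]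
    refine Finset.prod_congr rfl fun i _ => ?_
    rw [hmcast]; push_cast; ring
  have hp2 : (∏ i ∈ range (α+2), ((m:ℝ) + (β + ((α+2:ℕ):ℝ)) - (i:ℝ)))
      = poch ((n:ℝ)+β) (α+2) := by
    rw [← poch_reflect ((n:ℝ)+β) (α+2)]
    refine Finset.prod_congr rfl fun i _ => ?_
    rw [hmcast]; push_cast; ring
  rw [hp1, hp2]
  have hRx : R x = A * (x-1) * Polynomial.eval (x-1) (QQ m ((α:ℝ)+2) β) := by
    unfold R
    beta_reduce
    rw [← hm, jacobi_eval m ((α:ℝ)+2) β x]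
  rw [hRx]
  simp only [eval_mul, eval_C]
  have hone : (x+1)^(-β) * (x+1)^β = 1 := by
    rw [← Real.rpow_add hx1]; norm_num
  linear_combination (poch (n:ℝ) (α+2) * poch ((n:ℝ)+β) (α+2) * A * (x-1) *
    Polynomial.eval (x-1) (QQ m ((α:ℝ)+2) β)) * hone
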